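/- Let p be a polynomial with real coefficients of degree 6, with coefficients c_i, such that c_0 > 0, p is palindromic (c_i = c_{6-i} for all 0 ≤ i ≤ 6), and the coefficients of p alternate in sign ((-1)^i · c_i ≥ 0 for every i ≥ 0). If at least two of the complex roots of p, counted with multiplicity, lie on the unit circle, then every complex root z of p satisfies Re z > -1. -/

import Mathlib

/-- A real polynomial of degree `6` with positive constant term, palindromic
coefficients (`cᵢ = c_{6-i}`) and coefficients alternating in sign, having at
least two complex roots (counted with multiplicity) on the unit circle, has all
its complex roots with real part `> -1`. -/
theorem stmt_3 (p : Polynomial ℝ)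
    (hdeg : p.natDegree = 6)
    (h0 : 0 < p.coeff 0)
    (hpal : ∀ i ≤ 6, p.coeff i = p.coeff (6 - i))
    (halt : ∀ i : ℕ, 0 ≤ (-1 : ℝ) ^ i * p.coeff i)
    (hcirc : 2 ≤
      ((p.map (algebraMap ℝ ℂ)).roots.filter fun z => ‖z‖ = 1).card) :
    ∀ z : ℂ, Polynomial.aeval z p = 0 → -1 < z.re := by
  classical
  intro z hz
  by_contra hre
  push_neg at hre
  set P : Polynomial ℂ := p.map (algebraMap ℝ ℂ) with hPdef
  have hpne : p ≠ 0 := fun h => by simp [h] at h0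
  have hPne : P ≠ 0 := by
    simpa [hPdef] using (Polynomial.map_ne_zero_iff (algebraMap ℝ ℂ).injective).mpr hpne
  have hPdeg : P.natDegree = 6 := by
    rw [hPdef, Polynomial.natDegree_map_eq_of_injective (algebraMap ℝ ℂ).injective, hdeg]
  have hcoeff : ∀ i, P.coeff i = ((p.coeff i : ℝ) : ℂ) := by
    intro i; simp [hPdef]
  -- p is positive on nonpositive reals
  have hevalpos : ∀ x : ℝ, x ≤ 0 → 0 < p.eval x := by
    intro x hx
    rw [Polynomial.eval_eq_sum_range, hdeg]
    apply Finset.sum_pos'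
    · intro i _
      have h1 := halt i
      have hnn : 0 ≤ (-x) ^ i := pow_nonneg (by linarith) i
      have hxpow : p.coeff i * x ^ i = ((-1 : ℝ) ^ i * p.coeff i) * (-x) ^ i := by
        have : (-x : ℝ) ^ i = (-1 : ℝ) ^ i * x ^ i := by
          rw [← mul_pow]; norm_num
        rw [this]
        rcases Nat.even_or_odd i with he | ho
        · rw [he.neg_one_pow]; ring
        · rw [ho.neg_one_pow]; ring
      rw [hxpow]
      exact mul_nonneg h1 hnn
    · exact ⟨0, by simp, by simpa using h0⟩
  have hzP : P.eval z = 0 := by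
    rw [hPdef, Polynomial.eval_map, ← Polynomial.aeval_def]; exact hz
  -- z is not real
  have him : z.im ≠ 0 := by
    intro h
    have hzeq : z = ((z.re : ℝ) : ℂ) := Complex.ext rfl (by simp [h])
    have heq : P.eval ((algebraMap ℝ ℂ) z.re) = (algebraMap ℝ ℂ) (p.eval z.re) := by
      rw [hPdef, Polynomial.eval_map, Polynomial.eval₂_at_apply]
    rw [show (algebraMap ℝ ℂ) z.re = ((z.re : ℝ) : ℂ) from rfl, ← hzeq, hzP] at heq
    have hpos := hevalpos z.re (by linarith)
    rw [Complex.coe_algebraMap] at heq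
    have h0' : p.eval z.re = 0 := by exact_mod_cast heq.symm
    linarith
  have hz0 : z ≠ 0 := by
    intro h; rw [h] at hre; norm_num at hre
  have hnsq : 1 < Complex.normSq z := by
    rw [Complex.normSq_apply]
    have h2 : 0 < z.im * z.im := mul_self_pos.mpr him
    nlinarith
  have habs : 1 < ‖z‖ := by
    have h1 := Complex.sq_norm z
    nlinarith [norm_nonneg z]
  -- conjugate and inverse roots
  open ComplexConjugate in
  have hconjP : P.eval ((starRingEnd ℂ) z) = 0 := by
    have : (Polynomial.aeval ((starRingEnd ℂ) z)) p = 0 := by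
      rw [Polynomial.aeval_conj, hz, map_zero]
    rw [hPdef, Polynomial.eval_map, ← Polynomial.aeval_def]; exact this
  have hinvroot : ∀ w : ℂ, w ≠ 0 → P.eval w = 0 → P.eval w⁻¹ = 0 := by
    intro w hw hroot
    have key : w ^ 6 * P.eval w⁻¹ = P.eval w := by
      rw [Polynomial.eval_eq_sum_range, Polynomial.eval_eq_sum_range, hPdeg,
        Finset.mul_sum]
      rw [← Finset.sum_range_reflect (fun i => P.coeff i * w ^ i) 7]
      refine Finset.sum_congr rfl fun i hi => ?_
      have hi7 : i < 7 := Finset.mem_range.mp hi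
      have hile : i ≤ 6 := Nat.lt_succ_iff.mp hi7
      have h1 : (7 : ℕ) - 1 - i = 6 - i := rfl
      have hc : P.coeff (6 - i) = P.coeff i := by
        rw [hcoeff, hcoeff, hpal i hile]
      rw [h1, hc]
      have : w ^ 6 * (w⁻¹) ^ i = w ^ (6 - i) := by
        rw [pow_sub₀ w hw hile, inv_pow]
      rw [← this]
      ring
    have h6 : w ^ 6 ≠ 0 := pow_ne_zero _ hw
    rw [hroot] at key
    exact (mul_eq_zero.mp key).resolve_left h6
  have hinvP : P.eval z⁻¹ = 0 := hinvroot z hz0 hzP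
  have hconj0 : (starRingEnd ℂ) z ≠ 0 := by simpa using hz0
  have hconjinvP : P.eval (((starRingEnd ℂ) z)⁻¹) = 0 :=
    hinvroot _ hconj0 hconjP
  -- the multiset of the four distinguished roots
  set R := P.roots with hR
  have hcard : Multiset.card R = 6 := by
    rw [hR, ← hPdeg]
    exact (Polynomial.splits_iff_card_roots.mp (IsAlgClosed.splits P)).symm ▸
      Polynomial.splits_iff_card_roots.mp (IsAlgClosed.splits P)
  set m : Multiset ℂ := {z, (starRingEnd ℂ) z, z⁻¹, ((starRingEnd ℂ) z)⁻¹} with hm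
  have habsconj : ‖(starRingEnd ℂ) z‖ = ‖z‖ := Complex.norm_conj z
  have habsinv : ‖z⁻¹‖ < 1 := by
    rw [norm_inv]
    exact inv_lt_one_of_one_lt₀ habs
  have habsconjinv : ‖((starRingEnd ℂ) z)⁻¹‖ < 1 := by
    rw [norm_inv, habsconj]
    exact inv_lt_one_of_one_lt₀ habs
  have hne1 : z ≠ (starRingEnd ℂ) z := by
    intro h
    exact him (Complex.conj_eq_iff_im.mp h.symm)
  have hne2 : z ≠ z⁻¹ := fun h => by rw [← h] at habsinv; linarith
  have hne3 : z ≠ ((starRingEnd ℂ) z)⁻¹ := fun h => by rw [← h] at habsconjinv; linarith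
  have hne4 : (starRingEnd ℂ) z ≠ z⁻¹ := fun h => by
    rw [← h, habsconj] at habsinv; linarith
  have hne5 : (starRingEnd ℂ) z ≠ ((starRingEnd ℂ) z)⁻¹ := fun h => by
    rw [← h, habsconj] at habsconjinv; linarith
  have hne6 : z⁻¹ ≠ ((starRingEnd ℂ) z)⁻¹ := fun h => hne1 (inv_injective h)
  have hnodup : m.Nodup := by
    simp only [hm, Multiset.insert_eq_cons, Multiset.nodup_cons, Multiset.mem_cons,
      Multiset.mem_singleton, Multiset.nodup_singleton, and_true]
    exact ⟨by tauto, by tauto, hne6⟩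
  have hmem : ∀ w : ℂ, P.eval w = 0 → w ∈ R := by
    intro w hw
    rw [hR, Polynomial.mem_roots hPne]
    exact hw
  have hmle : m ≤ R := by
    rw [Multiset.le_iff_subset hnodup]
    intro x hx
    simp only [hm, Multiset.insert_eq_cons, Multiset.mem_cons, Multiset.mem_singleton] at hx
    rcases hx with h | h | h | h <;> subst h
    · exact hmem _ hzP
    · exact hmem _ hconjP
    · exact hmem _ hinvP
    · exact hmem _ hconjinvP
  have hanotone : ∀ x ∈ m, ‖x‖ ≠ 1 := by
    intro x hx
    simp only [hm, Multiset.insert_eq_cons, Multiset.mem_cons, Multiset.mem_singleton] at hx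
    rcases hx with h | h | h | h <;> subst h
    · linarith
    · rw [habsconj]; linarith
    · linarith
    · linarith
  set F := R.filter (fun z => ‖z‖ = 1) with hF
  have hFle : F ≤ R - m := by
    rw [Multiset.le_iff_count]
    intro x
    rw [Multiset.count_sub]
    by_cases hx : ‖x‖ = 1
    · have hxm : x ∉ m := fun h => hanotone x h hx
      rw [Multiset.count_eq_zero.mpr hxm, Nat.sub_zero]
      exact Multiset.count_le_of_le x (Multiset.filter_le _ R)
    · rw [hF, Multiset.count_filter, if_neg hx]
      exact Nat.zero_le _
  have hmcard : Multiset.card m = 4 := by simp [hm]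
  have hRcard : Multiset.card (R - m) = 2 := by
    rw [Multiset.card_sub hmle, hcard, hmcard]
  have hFeq : F = R - m := by
    refine Multiset.eq_of_le_of_card_le hFle ?_
    rw [hRcard]
    exact hcirc
  have hRsplit : m + (R - m) = R := add_tsub_cancel_of_le hmle
  -- sum of real parts of roots
  have hc6 : p.coeff 6 = p.coeff 0 := (hpal 0 (by norm_num)).symm
  have hc6pos : 0 < p.coeff 6 := hc6 ▸ h0
  have hc5 : p.coeff 5 ≤ 0 := by
    have := halt 5
    have h5 : ((-1 : ℝ)) ^ 5 = -1 := by norm_num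
    rw [h5] at this
    linarith
  have hlead : P.leadingCoeff = ((p.coeff 6 : ℝ) : ℂ) := by
    rw [Polynomial.leadingCoeff, hPdeg, hcoeff]
  have hleadne : P.leadingCoeff ≠ 0 := by
    rw [hlead]
    exact_mod_cast hc6pos.ne'
  set M := P * Polynomial.C (P.leadingCoeff)⁻¹ with hM
  have hMmonic : M.Monic := Polynomial.monic_mul_leadingCoeff_inv hPne
  have hMroots : M.roots = R := by
    rw [hM, mul_comm, Polynomial.roots_C_mul _ (inv_ne_zero hleadne), hR]
  have hMdeg : M.natDegree = 6 := by
    rw [hM, Polynomial.natDegree_mul hPne (by simp [hleadne]), Polynomial.natDegree_C,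
      hPdeg]
  have hsumroots : M.nextCoeff = -M.roots.sum :=
    (IsAlgClosed.splits M).nextCoeff_eq_neg_sum_roots_of_monic hMmonic
  have hnext : M.nextCoeff = ((p.coeff 5 : ℝ) : ℂ) * (((p.coeff 6 : ℝ) : ℂ))⁻¹ := by
    rw [Polynomial.nextCoeff_of_natDegree_pos (by rw [hMdeg]; norm_num), hMdeg]
    rw [hM, Polynomial.coeff_mul_C, hcoeff, hlead]
  have hRsum : R.sum = -(((p.coeff 5 : ℝ) : ℂ) * (((p.coeff 6 : ℝ) : ℂ))⁻¹) := by
    rw [hnext] at hsumroots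
    rw [← hMroots]
    linear_combination hsumroots
  have hsumre : 0 ≤ (R.sum).re := by
    rw [hRsum]
    have : (-(((p.coeff 5 : ℝ) : ℂ) * (((p.coeff 6 : ℝ) : ℂ))⁻¹)) = (((-(p.coeff 5) * (p.coeff 6)⁻¹ : ℝ)) : ℂ) := by
      push_cast; ring
    rw [this, Complex.ofReal_re]
    have : 0 ≤ -(p.coeff 5) := by linarith
    positivity
  -- compute sum of real parts via the decomposition
  have hre_sum : (R.sum).re = ((R.map Complex.re).sum) := by
    rw [← Complex.coe_reAddGroupHom, map_multiset_sum]
  have hmapsplit : (R.map Complex.re).sum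
      = ((m.map Complex.re).sum) + (((R - m).map Complex.re).sum) := by
    rw [← hRsplit, Multiset.map_add, Multiset.sum_add, hRsplit]
  have hinvre : (z⁻¹).re = z.re / Complex.normSq z := Complex.inv_re z
  have hconjinvre : (((starRingEnd ℂ) z)⁻¹).re = z.re / Complex.normSq z := by
    rw [Complex.inv_re, Complex.normSq_conj, Complex.conj_re]
  have hmsum : (m.map Complex.re).sum = 2 * z.re + 2 * (z.re / Complex.normSq z) := by
    simp only [hm, Multiset.insert_eq_cons, Multiset.map_cons, Multiset.map_singleton,
      Multiset.sum_cons, Multiset.sum_singleton, Complex.conj_re, hinvre, hconjinvre]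
    ring
  have hmsumlt : (m.map Complex.re).sum < -2 := by
    rw [hmsum]
    have hnpos : 0 < Complex.normSq z := by linarith
    have : z.re / Complex.normSq z < 0 := div_neg_of_neg_of_pos (by linarith) hnpos
    linarith
  have hFre : ∀ x ∈ R - m, x.re ≤ 1 := by
    intro x hx
    have hxF : x ∈ F := hFeq ▸ hx
    have habs1 : ‖x‖ = 1 := by
      have := Multiset.mem_filter.mp (hF ▸ hxF : x ∈ Multiset.filter (fun z => ‖z‖ = 1) R)
      exact this.2
    calc x.re ≤ |x.re| := le_abs_self _
      _ ≤ ‖x‖ := Complex.abs_re_le_norm x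
      _ = 1 := habs1
  have hFsumle : (((R - m).map Complex.re).sum) ≤ 2 := by
    have h := Multiset.sum_le_card_nsmul ((R - m).map Complex.re) 1 (by
      intro x hx
      rw [Multiset.mem_map] at hx
      obtain ⟨y, hy, rfl⟩ := hx
      exact hFre y hy)
    rw [Multiset.card_map, hRcard] at h
    simpa using h
  have : (R.sum).re < 0 := by
    rw [hre_sum, hmapsplit]
    linarith
  linarith
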